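/- Let T > 0 and let ν, μ be probability measures on ℝ^d with Lebesgue densities (also denoted ν, μ). Let r be the measure on ℝ^d × ℝ^d with Lebesgue density r(z,x) = ν(z)·(2πT)^{-d/2}·exp(-‖x-z‖²/(2T)). Then for every coupling π of (ν, μ) (a probability measure on ℝ^d × ℝ^d whose first marginal is ν and second marginal is μ) that is absolutely continuous with respect to ν ⊗ μ, has finite transport cost ∫‖x-z‖² dπ(z,x) < ∞, finite relative entropy D_KL(π ‖ ν⊗μ) < ∞, and such that log μ is μ-integrable, one has the identity D_KL(π ‖ r) = (1/(2T))·∫‖x-z‖² dπ(z,x) + D_KL(π ‖ ν⊗μ) + ∫ log μ dμ + (d/2)·log(2πT). In particular, minimizing D_KL(π ‖ r) over couplings of (ν, μ) is equivalent to minimizing the entropy-regularized optimal transport objective ∫ (1/2)‖x-z‖² dπ + T·D_KL(π ‖ ν⊗μ). -/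

import Mathlib

open MeasureTheory Real
open ENNReal
lemma myWithDensity_eq_of_le_of_eq {α : Type*} [MeasurableSpace α] {m : Measure α}
    {f g : α → ℝ≥0∞} (hle : ∀ x, g x ≤ f x)
    (htot : ∫⁻ x, f x ∂m = ∫⁻ x, g x ∂m) (hfin : ∫⁻ x, g x ∂m ≠ ∞) :
    m.withDensity f = m.withDensity g := by
  ext s hs
  rw [withDensity_apply _ hs, withDensity_apply _ hs]
  have h1 : ∫⁻ x in s, g x ∂m ≤ ∫⁻ x in s, f x ∂m := lintegral_mono hle
  have h2 : ∫⁻ x in sᶜ, g x ∂m ≤ ∫⁻ x in sᶜ, f x ∂m := lintegral_mono hle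
  have hf := lintegral_add_compl f hs (μ := m)
  have hg := lintegral_add_compl g hs (μ := m)
  have hgc : ∫⁻ x in sᶜ, g x ∂m ≠ ∞ :=
    ne_top_of_le_ne_top hfin (hg ▸ le_add_self)
  refine le_antisymm ?_ h1
  have hsum : ∫⁻ x in s, f x ∂m + ∫⁻ x in sᶜ, g x ∂m
      ≤ ∫⁻ x in s, g x ∂m + ∫⁻ x in sᶜ, g x ∂m := by
    calc ∫⁻ x in s, f x ∂m + ∫⁻ x in sᶜ, g x ∂m
        ≤ ∫⁻ x in s, f x ∂m + ∫⁻ x in sᶜ, f x ∂m := add_le_add_right h2 _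
      _ = ∫⁻ x, f x ∂m := hf
      _ = ∫⁻ x, g x ∂m := htot
      _ = _ := hg.symm
  exact (ENNReal.add_le_add_iff_right hgc).mp hsum

lemma myExists_measurable_version {α : Type*} [MeasurableSpace α] (m : Measure α)
    (f : α → ℝ≥0∞) (hfin : ∫⁻ x, f x ∂m ≠ ∞) :
    ∃ g : α → ℝ≥0∞, Measurable g ∧ (∀ x, g x ≤ f x) ∧
      m.withDensity f = m.withDensity g ∧ ∫⁻ x, g x ∂m = ∫⁻ x, f x ∂m := by
  obtain ⟨g, hgm, hgle, hgeq⟩ := exists_measurable_le_lintegral_eq m f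
  exact ⟨g, hgm, fun x => hgle x, myWithDensity_eq_of_le_of_eq (fun x => hgle x) hgeq
      (hgeq ▸ hfin), hgeq.symm⟩

lemma myLog_ae_eq {α : Type*} [MeasurableSpace α] {m μ : Measure α} [IsFiniteMeasure μ]
    {f : α → ℝ} (hf : ∀ x, 0 ≤ f x)
    {g : α → ℝ≥0∞} (hgm : Measurable g) (hgle : ∀ x, g x ≤ ENNReal.ofReal (f x))
    (hμf : μ = m.withDensity (fun x => ENNReal.ofReal (f x)))
    (hμg : μ = m.withDensity g)
    (hgfin : ∫⁻ x, g x ∂m ≠ ∞)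
    (hm : AEStronglyMeasurable (fun x => Real.log (f x)) μ) :
    (fun x => Real.log (f x)) =ᵐ[μ] (fun x => Real.log (g x).toReal) := by
  have hμm : μ ≪ m := hμg ▸ withDensity_absolutelyContinuous m g
  have hgtopμ : ∀ᵐ x ∂μ, g x ≠ ∞ := hμm.ae_le ((ae_lt_top hgm hgfin).mono fun x h => h.ne)
  have hgpos : ∀ᵐ x ∂μ, g x ≠ 0 := by
    have h0 : μ {x | g x = 0} = 0 := by
      have hms : MeasurableSet {x | g x = 0} := hgm (measurableSet_singleton 0)
      rw [hμg, withDensity_apply _ hms]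
      calc ∫⁻ x in {x | g x = 0}, g x ∂m
          = ∫⁻ x in {x | g x = 0}, 0 ∂m :=
            setLIntegral_congr_fun hms
              (fun x hx => hx)
        _ = 0 := lintegral_zero
    rw [ae_iff]; simpa using h0
  have hfpos : ∀ᵐ x ∂μ, 0 < f x := by
    filter_upwards [hgpos] with x h0
    have : 0 < ENNReal.ofReal (f x) := lt_of_lt_of_le (pos_iff_ne_zero.mpr h0) (hgle x)
    exact ENNReal.ofReal_pos.mp this
  have ham := hm.aemeasurable
  set φ := ham.mk _ with hφdef
  have hφm : Measurable φ := ham.measurable_mk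
  have heq : (fun x => Real.log (f x)) =ᵐ[μ] φ := ham.ae_eq_mk
  set h : α → ℝ := fun x => Real.exp (φ x) with hhdef
  have hhm : Measurable h := Real.measurable_exp.comp hφm
  have hhf : ∀ᵐ x ∂μ, h x = f x := by
    filter_upwards [heq, hfpos] with x e p
    rw [hhdef]; simp only [← e]; exact Real.exp_log p
  have hs : μ {x | ¬ h x = f x} = 0 := by rw [← ae_iff]; exact hhf
  set W := toMeasurable μ {x | ¬ h x = f x} with hWdef
  have hWm : MeasurableSet W := measurableSet_toMeasurable _ _
  have hW : μ W = 0 := by rw [hWdef, measure_toMeasurable]; exact hs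
  -- E₂ : where ofReal h < g
  have hE2 : μ {x | ENNReal.ofReal (h x) < g x} = 0 := by
    refine measure_mono_null (fun x hx => ?_) hs
    intro hcontra
    exact absurd (lt_of_lt_of_le (hx : ENNReal.ofReal (h x) < g x)
      (hcontra ▸ hgle x)) (lt_irrefl _)
  -- E₁ : where g < ofReal h
  have hE1m : MeasurableSet {x | g x < ENNReal.ofReal (h x)} :=
    measurableSet_lt hgm (ENNReal.measurable_ofReal.comp hhm)
  set S := {x | g x < ENNReal.ofReal (h x)} \ W with hSdef
  have hSm : MeasurableSet S := hE1m.diff hWm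
  have hfh_on_S : ∀ x ∈ S, ENNReal.ofReal (f x) = ENNReal.ofReal (h x) := by
    intro x hx
    have : ¬ x ∈ {x | ¬ h x = f x} := fun hc => hx.2 (subset_toMeasurable _ _ hc)
    simp only [Set.mem_setOf_eq, not_not] at this
    rw [this]
  have hμS1 : μ S = ∫⁻ x in S, ENNReal.ofReal (h x) ∂m := by
    conv_lhs => rw [hμf]
    rw [withDensity_apply _ hSm]
    exact setLIntegral_congr_fun hSm hfh_on_S
  have hμS2 : μ S = ∫⁻ x in S, g x ∂m := by
    conv_lhs => rw [hμg]; rw [withDensity_apply _ hSm]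
  have hfin2 : ∫⁻ x in S, g x ∂m ≠ ∞ :=
    ne_top_of_le_ne_top hgfin (setLIntegral_le_lintegral _ _)
  have hzero : ∫⁻ x in S, (ENNReal.ofReal (h x) - g x) ∂m = 0 := by
    rw [lintegral_sub hgm hfin2 ?_]
    · rw [← hμS1, ← hμS2]; exact tsub_self _
    · filter_upwards [ae_restrict_mem hSm] with x hx
      exact (hx.1 : g x < ENNReal.ofReal (h x)).le
  have hae0 : ∀ᵐ x ∂(m.restrict S), ENNReal.ofReal (h x) - g x = 0 :=
    (lintegral_eq_zero_iff ((ENNReal.measurable_ofReal.comp hhm).sub hgm)).mp hzero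
  have hmS : m S = 0 := by
    have hfalse : ∀ᵐ x ∂(m.restrict S), False := by
      filter_upwards [hae0, ae_restrict_mem hSm] with x h1 h2
      exact absurd (tsub_eq_zero_iff_le.mp h1) (not_le.mpr h2.1)
    have := ae_iff.mp hfalse
    simpa [Measure.restrict_apply_univ] using this
  have hμS : μ S = 0 := by rw [hμS2]; exact setLIntegral_measure_zero _ _ hmS
  have hE1 : μ {x | g x < ENNReal.ofReal (h x)} = 0 := by
    refine measure_mono_null (fun x hx => ?_) (measure_union_null hμS hW)
    by_cases hw : x ∈ W
    · exact Or.inr hw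
    · exact Or.inl ⟨hx, hw⟩
  have hgh : ∀ᵐ x ∂μ, g x = ENNReal.ofReal (h x) := by
    have : μ {x | ¬ g x = ENNReal.ofReal (h x)} = 0 := by
      refine measure_mono_null (fun x hx => ?_) (measure_union_null hE1 hE2)
      rcases lt_or_gt_of_ne (hx : g x ≠ ENNReal.ofReal (h x)) with h1 | h1
      · exact Or.inl h1
      · exact Or.inr h1
    rw [ae_iff]; exact this
  filter_upwards [heq, hgh, hfpos] with x e1 e2 e3
  rw [e2, ENNReal.toReal_ofReal (Real.exp_pos _).le]
  rw [e1]; exact (Real.log_exp _).symm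

lemma myGaussInt {d : ℕ} {T : ℝ} (hT : 0 < T) (z : EuclideanSpace ℝ (Fin d)) :
    ∫⁻ x : EuclideanSpace ℝ (Fin d),
      ENNReal.ofReal ((2 * π * T) ^ (-(d : ℝ) / 2) *
        Real.exp (-‖x - z‖ ^ 2 / (2 * T))) ∂volume = 1 := by
  have hb : (0:ℝ) < (2*T)⁻¹ := by positivity
  have h2πT : (0:ℝ) < 2 * π * T := by positivity
  have hint : Integrable (fun v : EuclideanSpace ℝ (Fin d) => rexp (-(2*T)⁻¹ * ‖v‖ ^ 2)) := by
    have hc := (GaussianFourier.integrable_cexp_neg_mul_sq_norm_add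
      (b := ((((2*T)⁻¹ : ℝ)) : ℂ)) (V := EuclideanSpace ℝ (Fin d))
      (by simpa using hb) 0 0).norm
    refine hc.congr (Filter.Eventually.of_forall fun v => ?_)
    have hre : (-((((2*T)⁻¹ : ℝ)) : ℂ) * (‖v‖ : ℂ) ^ 2
        + 0 * ((inner ℝ (0 : EuclideanSpace ℝ (Fin d)) v : ℝ) : ℂ))
        = (((-(2*T)⁻¹ * ‖v‖ ^ 2 : ℝ)) : ℂ) := by push_cast; ring
    simp only [Complex.norm_exp, hre, Complex.ofReal_re]
  have hint' : Integrable (fun x : EuclideanSpace ℝ (Fin d) => rexp (-(2*T)⁻¹ * ‖x - z‖ ^ 2)) :=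
    hint.comp_sub_right z
  have hI : ∫ x : EuclideanSpace ℝ (Fin d), rexp (-(2*T)⁻¹ * ‖x - z‖ ^ 2)
      = (2*π*T) ^ ((d:ℝ)/2) := by
    rw [integral_sub_right_eq_self (fun v : EuclideanSpace ℝ (Fin d) =>
      rexp (-(2*T)⁻¹ * ‖v‖ ^ 2)) z]
    rw [GaussianFourier.integral_rexp_neg_mul_sq_norm hb, finrank_euclideanSpace_fin]
    congr 1
    field_simp
  have hexp : ∀ x : EuclideanSpace ℝ (Fin d), -‖x - z‖ ^ 2 / (2*T) = -(2*T)⁻¹ * ‖x - z‖ ^ 2 := by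
    intro x; field_simp
  calc ∫⁻ x : EuclideanSpace ℝ (Fin d),
        ENNReal.ofReal ((2*π*T) ^ (-(d:ℝ)/2) * rexp (-‖x - z‖ ^ 2 / (2*T))) ∂volume
      = ∫⁻ x : EuclideanSpace ℝ (Fin d),
        ENNReal.ofReal ((2*π*T) ^ (-(d:ℝ)/2) * rexp (-(2*T)⁻¹ * ‖x - z‖ ^ 2)) ∂volume := by
        congr 1; funext x; rw [hexp x]
    _ = ENNReal.ofReal (∫ x : EuclideanSpace ℝ (Fin d),
        (2*π*T) ^ (-(d:ℝ)/2) * rexp (-(2*T)⁻¹ * ‖x - z‖ ^ 2)) := by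
        rw [ofReal_integral_eq_lintegral_ofReal (hint'.const_mul _)
          (Filter.Eventually.of_forall fun x => by positivity)]
    _ = 1 := by
        rw [integral_const_mul, hI, ← Real.rpow_add h2πT]
        norm_num
        rw [show -(d:ℝ)/2 + (d:ℝ)/2 = 0 by ring, Real.rpow_zero]


/-- The Kullback–Leibler divergence `∫ log (dP/dQ) dP` (as a real number, meaningful
when `P ≪ Q` and the log-likelihood ratio is `P`-integrable). -/
noncomputable def klDivR {α : Type*} [MeasurableSpace α] (P Q : Measure α) : ℝ :=
  ∫ x, llr P Q x ∂P

/-- Static Schrödinger bridge as entropy-regularized optimal transport: for the reference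
`r(z,x) = ν(z)·(2πT)^{-d/2}·exp(-‖x-z‖²/(2T))`, every coupling `π` of `(ν, μ)` with
finite transport cost and finite relative entropy satisfies
`D_KL(π‖r) = (1/(2T))·∫‖x-z‖² dπ + D_KL(π‖ν⊗μ) + ∫ log μ dμ + (d/2)·log(2πT)`;
in particular minimizing `D_KL(·‖r)` over such couplings is equivalent to minimizing the
entropy-regularized optimal transport objective `∫ (1/2)‖x-z‖² dπ + T·D_KL(π‖ν⊗μ)`. -/
theorem stmt0 {d : ℕ} {T : ℝ} (hT : 0 < T)
    (fν fμ : EuclideanSpace ℝ (Fin d) → ℝ) (hfν : ∀ x, 0 ≤ fν x) (hfμ : ∀ x, 0 ≤ fμ x)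
    (ν μ : Measure (EuclideanSpace ℝ (Fin d)))
    [IsProbabilityMeasure ν] [IsProbabilityMeasure μ]
    (hν : ν = volume.withDensity fun x => ENNReal.ofReal (fν x))
    (hμ : μ = volume.withDensity fun x => ENNReal.ofReal (fμ x))
    (r : Measure (EuclideanSpace ℝ (Fin d) × EuclideanSpace ℝ (Fin d)))
    (hr : r = volume.withDensity fun p => ENNReal.ofReal
      (fν p.1 * ((2 * π * T) ^ (-(d : ℝ) / 2) * Real.exp (-‖p.2 - p.1‖ ^ 2 / (2 * T)))))
    (hlogμ : Integrable (fun x => Real.log (fμ x)) μ) :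
    (∀ π' : Measure (EuclideanSpace ℝ (Fin d) × EuclideanSpace ℝ (Fin d)),
      IsProbabilityMeasure π' →
      π'.map Prod.fst = ν → π'.map Prod.snd = μ →
      π' ≪ ν.prod μ →
      Integrable (fun p => ‖p.2 - p.1‖ ^ 2) π' →
      Integrable (llr π' (ν.prod μ)) π' →
      klDivR π' r = (1 / (2 * T)) * ∫ p, ‖p.2 - p.1‖ ^ 2 ∂π' + klDivR π' (ν.prod μ)
        + ∫ x, Real.log (fμ x) ∂μ + (d / 2 : ℝ) * Real.log (2 * π * T)) ∧
    (∀ π₁ π₂ : Measure (EuclideanSpace ℝ (Fin d) × EuclideanSpace ℝ (Fin d)),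
      IsProbabilityMeasure π₁ → IsProbabilityMeasure π₂ →
      π₁.map Prod.fst = ν → π₁.map Prod.snd = μ → π₁ ≪ ν.prod μ →
      Integrable (fun p => ‖p.2 - p.1‖ ^ 2) π₁ → Integrable (llr π₁ (ν.prod μ)) π₁ →
      π₂.map Prod.fst = ν → π₂.map Prod.snd = μ → π₂ ≪ ν.prod μ →
      Integrable (fun p => ‖p.2 - p.1‖ ^ 2) π₂ → Integrable (llr π₂ (ν.prod μ)) π₂ →
      (klDivR π₁ r ≤ klDivR π₂ r ↔
        (∫ p, (1 / 2 : ℝ) * ‖p.2 - p.1‖ ^ 2 ∂π₁) + T * klDivR π₁ (ν.prod μ) ≤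
          (∫ p, (1 / 2 : ℝ) * ‖p.2 - p.1‖ ^ 2 ∂π₂) + T * klDivR π₂ (ν.prod μ))) := by
  have h2πT : (0:ℝ) < 2 * π * T := by positivity
  -- measurable versions of the densities
  have hνuniv : ∫⁻ x, ENNReal.ofReal (fν x) ∂volume = 1 := by
    have h := measure_univ (μ := ν)
    rw [hν, withDensity_apply _ MeasurableSet.univ, Measure.restrict_univ] at h
    exact h
  have hμuniv : ∫⁻ x, ENNReal.ofReal (fμ x) ∂volume = 1 := by
    have h := measure_univ (μ := μ)
    rw [hμ, withDensity_apply _ MeasurableSet.univ, Measure.restrict_univ] at h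
    exact h
  obtain ⟨gν, hgνm, hgνle, hgνeq, hgνint⟩ := myExists_measurable_version volume
    (fun x => ENNReal.ofReal (fν x)) (by rw [hνuniv]; exact one_ne_top)
  obtain ⟨gμ, hgμm, hgμle, hgμeq, hgμint⟩ := myExists_measurable_version volume
    (fun x => ENNReal.ofReal (fμ x)) (by rw [hμuniv]; exact one_ne_top)
  rw [hνuniv] at hgνint
  rw [hμuniv] at hgμint
  have hν' : ν = volume.withDensity gν := hν.trans hgνeq
  have hμ' : μ = volume.withDensity gμ := hμ.trans hgμeq
  -- crux : log fμ = log gμ a.e. μ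
  have hlogae : (fun x => Real.log (fμ x)) =ᵐ[μ] (fun x => Real.log (gμ x).toReal) :=
    myLog_ae_eq hfμ hgμm hgμle hμ hμ' (by rw [hgμint]; exact one_ne_top)
      hlogμ.aestronglyMeasurable
  -- the gaussian kernel
  set G : EuclideanSpace ℝ (Fin d) × EuclideanSpace ℝ (Fin d) → ℝ :=
    fun p => (2 * π * T) ^ (-(d : ℝ) / 2) * Real.exp (-‖p.2 - p.1‖ ^ 2 / (2 * T)) with hGdef
  have hGpos : ∀ p, 0 < G p := fun p => by
    rw [hGdef]; positivity
  have hGcont : Continuous G := by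
    rw [hGdef]
    exact continuous_const.mul (Real.continuous_exp.comp
      (((continuous_snd.sub continuous_fst).norm.pow 2).neg.div_const (2 * T)))
  set GG : EuclideanSpace ℝ (Fin d) × EuclideanSpace ℝ (Fin d) → ℝ≥0∞ :=
    fun p => ENNReal.ofReal (G p) with hGGdef
  have hGGm : Measurable GG := ENNReal.measurable_ofReal.comp hGcont.measurable
  have hGGpos : ∀ p, GG p ≠ 0 := fun p => by
    simp only [hGGdef, ne_eq, ENNReal.ofReal_eq_zero, not_le]; exact hGpos p
  have hGGtop : ∀ p, GG p ≠ ∞ := fun p => ENNReal.ofReal_ne_top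
  have hGint : ∀ z, ∫⁻ x, GG (z, x) ∂volume = 1 := fun z => myGaussInt hT z
  -- r with a measurable density
  set u : EuclideanSpace ℝ (Fin d) × EuclideanSpace ℝ (Fin d) → ℝ≥0∞ :=
    fun p => ENNReal.ofReal (fν p.1) * GG p with hudef
  have hru : r = volume.withDensity u := by
    rw [hr]
    congr 1
    funext p
    rw [hudef, hGGdef, hGdef]
    exact ENNReal.ofReal_mul (hfν p.1)
  set w : EuclideanSpace ℝ (Fin d) × EuclideanSpace ℝ (Fin d) → ℝ≥0∞ :=
    fun p => gν p.1 * GG p with hwdef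
  have hwm : Measurable w := (hgνm.comp measurable_fst).mul hGGm
  have hvol2 : (volume : Measure (EuclideanSpace ℝ (Fin d) × EuclideanSpace ℝ (Fin d)))
      = (volume : Measure (EuclideanSpace ℝ (Fin d))).prod volume := rfl
  have hwint : ∫⁻ p, w p ∂volume = 1 := by
    rw [hvol2, lintegral_prod w hwm.aemeasurable]
    have : ∀ z, ∫⁻ x, w (z, x) ∂volume = gν z := by
      intro z
      rw [hwdef]
      simp only
      rw [lintegral_const_mul _ (show Measurable (fun x => GG (z, x)) from hGGm.comp measurable_prodMk_left), hGint z, mul_one]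
    simp_rw [this]
    have h := measure_univ (μ := ν)
    rw [hν', withDensity_apply _ MeasurableSet.univ, Measure.restrict_univ] at h
    exact h
  have hule : ∀ p, w p ≤ u p := fun p => mul_le_mul_left (hgνle p.1) _
  have huint : ∫⁻ p, u p ∂volume = 1 := by
    refine le_antisymm ?_ (hwint ▸ lintegral_mono hule)
    obtain ⟨q, hqm, hqle, hqeq⟩ := exists_measurable_le_lintegral_eq
      (volume : Measure (EuclideanSpace ℝ (Fin d) × EuclideanSpace ℝ (Fin d))) u
    rw [hqeq, hvol2, lintegral_prod q hqm.aemeasurable]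
    calc ∫⁻ z, ∫⁻ x, q (z, x) ∂volume ∂volume
        ≤ ∫⁻ z, ENNReal.ofReal (fν z) ∂volume := by
          refine lintegral_mono fun z => ?_
          calc ∫⁻ x, q (z, x) ∂volume
              ≤ ∫⁻ x, ENNReal.ofReal (fν z) * GG (z, x) ∂volume :=
                lintegral_mono fun x => hqle (z, x)
            _ = ENNReal.ofReal (fν z) := by
                rw [lintegral_const_mul _ (show Measurable (fun x => GG (z, x)) from hGGm.comp measurable_prodMk_left), hGint z, mul_one]
      _ = 1 := hνuniv
  have hrw : r = volume.withDensity w :=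
    hru.trans (myWithDensity_eq_of_le_of_eq hule (huint.trans hwint.symm)
      (hwint ▸ one_ne_top))
  haveI hrprob : IsProbabilityMeasure r := by
    constructor
    rw [hrw, withDensity_apply _ MeasurableSet.univ, Measure.restrict_univ]
    exact hwint
  -- the product measure with a measurable density
  have hprodD : ν.prod μ = volume.withDensity (fun p => gν p.1 * gμ p.2) := by
    refine Measure.prod_eq fun s t hs ht => ?_
    rw [withDensity_apply _ (hs.prod ht), hvol2, ← Measure.prod_restrict s t]
    rw [lintegral_prod
      (fun p : EuclideanSpace ℝ (Fin d) × EuclideanSpace ℝ (Fin d) => gν p.1 * gμ p.2)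
      ((hgνm.comp measurable_fst).mul (hgμm.comp measurable_snd)).aemeasurable]
    have hinner : ∀ z, ∫⁻ x in t, gν z * gμ x ∂volume = gν z * μ t := by
      intro z
      rw [lintegral_const_mul _ hgμm]
      congr 1
      rw [hμ', withDensity_apply _ ht]
    simp only [hinner]
    rw [lintegral_mul_const _ hgνm]
    congr 1
    rw [hν', withDensity_apply _ hs]
  set D : EuclideanSpace ℝ (Fin d) × EuclideanSpace ℝ (Fin d) → ℝ≥0∞ :=
    fun p => gμ p.2 * (GG p)⁻¹ with hDdef
  have hDm : Measurable D := (hgμm.comp measurable_snd).mul hGGm.inv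
  have hprod_r : ν.prod μ = r.withDensity D := by
    rw [hrw, ← withDensity_mul _ hwm hDm, hprodD]
    congr 1
    funext p
    show gν p.1 * gμ p.2 = (w * D) p
    rw [Pi.mul_apply, hwdef, hDdef]
    simp only
    rw [mul_assoc, mul_comm (GG p), mul_assoc, ENNReal.inv_mul_cancel (hGGpos p) (hGGtop p),
      mul_one]
  have hacr : ν.prod μ ≪ r := by
    rw [hprod_r]; exact withDensity_absolutelyContinuous r D
  have hDr : (ν.prod μ).rnDeriv r =ᵐ[r] D := by
    rw [hprod_r]; exact Measure.rnDeriv_withDensity r hDm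
  -- null sets of gμ
  have hμg0 : μ {x | gμ x = 0} = 0 := by
    have hms : MeasurableSet {x | gμ x = 0} := hgμm (measurableSet_singleton 0)
    rw [hμ', withDensity_apply _ hms]
    calc ∫⁻ x in {x | gμ x = 0}, gμ x ∂volume
        = ∫⁻ x in {x | gμ x = 0}, 0 ∂volume :=
          setLIntegral_congr_fun hms (fun x hx => hx)
      _ = 0 := lintegral_zero
  have hμgtop : μ {x | gμ x = ∞} = 0 := by
    have hvol0 : (volume : Measure (EuclideanSpace ℝ (Fin d))) {x | gμ x = ∞} = 0 := by
      have h := ae_lt_top hgμm (by rw [hgμint]; exact one_ne_top)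
      rw [ae_iff] at h
      simpa using h
    have : μ ≪ volume := hμ' ▸ withDensity_absolutelyContinuous _ _
    exact this hvol0
  -- the key identity
  have key : ∀ π' : Measure (EuclideanSpace ℝ (Fin d) × EuclideanSpace ℝ (Fin d)),
      IsProbabilityMeasure π' →
      π'.map Prod.fst = ν → π'.map Prod.snd = μ →
      π' ≪ ν.prod μ →
      Integrable (fun p => ‖p.2 - p.1‖ ^ 2) π' →
      Integrable (llr π' (ν.prod μ)) π' →
      klDivR π' r = (1 / (2 * T)) * ∫ p, ‖p.2 - p.1‖ ^ 2 ∂π' + klDivR π' (ν.prod μ)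
        + ∫ x, Real.log (fμ x) ∂μ + (d / 2 : ℝ) * Real.log (2 * π * T) := by
    intro π' hπP hfst hsnd hac hcost hllrint
    have hπr : π' ≪ r := hac.trans hacr
    -- transfer of μ-null sets along the second marginal
    have hsnd_null : ∀ N : Set (EuclideanSpace ℝ (Fin d)), μ N = 0 →
        π' {p | p.2 ∈ N} = 0 := by
      intro N hN
      have hsub : {p : EuclideanSpace ℝ (Fin d) × EuclideanSpace ℝ (Fin d) | p.2 ∈ N}
          ⊆ Prod.snd ⁻¹' (toMeasurable μ N) := fun p hp => subset_toMeasurable μ N hp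
      refine measure_mono_null hsub ?_
      have : π' (Prod.snd ⁻¹' (toMeasurable μ N)) = (π'.map Prod.snd) (toMeasurable μ N) :=
        (Measure.map_apply measurable_snd (measurableSet_toMeasurable μ N)).symm
      rw [this, hsnd, measure_toMeasurable]
      exact hN
    have h1 : ∀ᵐ p ∂π', π'.rnDeriv (ν.prod μ) p * (ν.prod μ).rnDeriv r p = π'.rnDeriv r p :=
      hπr.ae_le (Measure.rnDeriv_mul_rnDeriv hac)
    have h2 : ∀ᵐ p ∂π', (ν.prod μ).rnDeriv r p = D p := hπr.ae_le hDr
    have h3 : ∀ᵐ p ∂π', 0 < π'.rnDeriv (ν.prod μ) p := Measure.rnDeriv_pos hac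
    have h4 : ∀ᵐ p ∂π', π'.rnDeriv (ν.prod μ) p < ∞ :=
      hac.ae_le (Measure.rnDeriv_lt_top π' (ν.prod μ))
    have h5 : ∀ᵐ p ∂π', gμ p.2 ≠ 0 := by
      have := hsnd_null _ hμg0
      rw [ae_iff]
      simpa using this
    have h6 : ∀ᵐ p ∂π', gμ p.2 ≠ ∞ := by
      have := hsnd_null _ hμgtop
      rw [ae_iff]
      simpa using this
    have h7 : ∀ᵐ p ∂π', Real.log (fμ p.2) = Real.log (gμ p.2).toReal := by
      have hN : μ {x | ¬ Real.log (fμ x) = Real.log (gμ x).toReal} = 0 := by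
        rw [← ae_iff]; exact hlogae
      have := hsnd_null _ hN
      rw [ae_iff]
      simpa using this
    -- pointwise identity for the log-likelihood ratio
    have hll : llr π' r =ᵐ[π'] fun p => llr π' (ν.prod μ) p + (Real.log (fμ p.2)
        + (‖p.2 - p.1‖ ^ 2 / (2 * T) + (d / 2 : ℝ) * Real.log (2 * π * T))) := by
      filter_upwards [h1, h2, h3, h4, h5, h6, h7] with p e1 e2 e3 e4 e5 e6 e7
      have hρ : (π'.rnDeriv r p).toReal
          = (π'.rnDeriv (ν.prod μ) p).toReal * ((gμ p.2).toReal * (G p)⁻¹) := by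
        rw [← e1, e2, hDdef]
        simp only
        rw [ENNReal.toReal_mul, ENNReal.toReal_mul, ENNReal.toReal_inv]
        rw [hGGdef]
        simp only
        rw [ENNReal.toReal_ofReal (hGpos p).le]
      have hρne : (π'.rnDeriv (ν.prod μ) p).toReal ≠ 0 :=
        (ENNReal.toReal_pos e3.ne' e4.ne).ne'
      have hgμne : (gμ p.2).toReal ≠ 0 := (ENNReal.toReal_pos e5 e6).ne'
      have hGne : (G p)⁻¹ ≠ 0 := inv_ne_zero (hGpos p).ne'
      show Real.log (π'.rnDeriv r p).toReal = _
      rw [hρ, Real.log_mul hρne (mul_ne_zero hgμne hGne), Real.log_mul hgμne hGne,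
        Real.log_inv]
      have hlogG : Real.log (G p) = (-(d : ℝ) / 2) * Real.log (2 * π * T)
          + (-‖p.2 - p.1‖ ^ 2 / (2 * T)) := by
        rw [hGdef]
        simp only
        rw [Real.log_mul (by positivity) (Real.exp_pos _).ne', Real.log_rpow h2πT,
          Real.log_exp]
      rw [hlogG, ← e7]
      show Real.log (π'.rnDeriv (ν.prod μ) p).toReal + _ = Real.log (π'.rnDeriv (ν.prod μ) p).toReal + _
      ring
    -- integrals
    have hmapμ : AEStronglyMeasurable (fun x => Real.log (fμ x)) (π'.map Prod.snd) := by
      rw [hsnd]; exact hlogμ.aestronglyMeasurable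
    have hAint : Integrable (fun p => Real.log (fμ p.2)) π' := by
      have h := (integrable_map_measure hmapμ measurable_snd.aemeasurable).mp
        (by rw [hsnd]; exact hlogμ)
      exact h
    have hAeq : ∫ p, Real.log (fμ p.2) ∂π' = ∫ x, Real.log (fμ x) ∂μ := by
      conv_rhs => rw [← hsnd]
      rw [integral_map measurable_snd.aemeasurable hmapμ]
    have hBint : Integrable (fun p => ‖p.2 - p.1‖ ^ 2 / (2 * T)
        + (d / 2 : ℝ) * Real.log (2 * π * T)) π' :=
      (hcost.div_const _).add (integrable_const _)
    have hABint : Integrable (fun p => Real.log (fμ p.2) + (‖p.2 - p.1‖ ^ 2 / (2 * T)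
        + (d / 2 : ℝ) * Real.log (2 * π * T))) π' := hAint.add hBint
    have hklr : klDivR π' r = ∫ p, (llr π' (ν.prod μ) p + (Real.log (fμ p.2)
        + (‖p.2 - p.1‖ ^ 2 / (2 * T) + (d / 2 : ℝ) * Real.log (2 * π * T)))) ∂π' := by
      simp only [klDivR]
      exact integral_congr_ae hll
    rw [hklr, integral_add hllrint hABint, integral_add hAint hBint,
      integral_add (hcost.div_const _) (integrable_const _), integral_div, integral_const,
      hAeq]
    simp only [measure_univ, probReal_univ, ENNReal.toReal_one, one_smul]
    show (∫ p, llr π' (ν.prod μ) p ∂π') + _ = _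
    show _ = _ + klDivR π' (ν.prod μ) + _ + _
    simp only [klDivR]
    ring
  refine ⟨key, ?_⟩
  intro p1 p2 hP1 hP2 hfst1 hsnd1 hac1 hcost1 hllr1 hfst2 hsnd2 hac2 hcost2 hllr2
  rw [key p1 hP1 hfst1 hsnd1 hac1 hcost1 hllr1, key p2 hP2 hfst2 hsnd2 hac2 hcost2 hllr2]
  have hmul : ∀ pp : Measure (EuclideanSpace ℝ (Fin d) × EuclideanSpace ℝ (Fin d)),
      ∫ p, (1 / 2 : ℝ) * ‖p.2 - p.1‖ ^ 2 ∂pp = (1 / 2 : ℝ) * ∫ p, ‖p.2 - p.1‖ ^ 2 ∂pp :=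
    fun pp => integral_const_mul _ _
  rw [hmul p1, hmul p2]
  set C₁ := ∫ p, ‖p.2 - p.1‖ ^ 2 ∂p1
  set C₂ := ∫ p, ‖p.2 - p.1‖ ^ 2 ∂p2
  set K₁ := klDivR p1 (ν.prod μ)
  set K₂ := klDivR p2 (ν.prod μ)
  have hTc : T * (1 / (2 * T)) = 1 / 2 := by field_simp
  constructor
  · intro h
    have h' : 1 / (2 * T) * C₁ + K₁ ≤ 1 / (2 * T) * C₂ + K₂ := by linarith
    have h2 := mul_le_mul_of_nonneg_left h' hT.le
    calc (1 / 2 : ℝ) * C₁ + T * K₁ = T * (1 / (2 * T) * C₁ + K₁) := by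
          rw [mul_add, ← mul_assoc, hTc]
      _ ≤ T * (1 / (2 * T) * C₂ + K₂) := h2
      _ = (1 / 2 : ℝ) * C₂ + T * K₂ := by rw [mul_add, ← mul_assoc, hTc]
  · intro h
    have hT' : (0:ℝ) < 1 / T := by positivity
    have h2 := mul_le_mul_of_nonneg_left h hT'.le
    have key3 : ∀ C K : ℝ, (1 / T) * ((1 / 2 : ℝ) * C + T * K) = 1 / (2 * T) * C + K := by
      intro C K; field_simp
    rw [key3, key3] at h2
    linarith
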